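/- Let K ⊆ ℝⁿ be a nonempty closed set, f = (f_1,…,f_q) a vector polynomial, x̄ ∈ K, and set S = K_x̄. Assume that: (a) SOL^w(S_∞, f^∞) is unbounded; and (b) for every v ∈ SOL^w(S_∞, f^∞) with v ≠ 0 there exists t > 0 such that for every x ∈ S one has x − tv ∈ K and f_i(x − tv) ≤ f_i(x) for all i = 1,…,q. Then SOL^s(K, f) ≠ ∅. -/

import Mathlib

open Filter Topology MvPolynomial Bornology

noncomputable section

/-- The asymptotic (recession) cone of a set `A ⊆ ℝⁿ`. -/
def asymCone {n : ℕ} (A : Set (Fin n → ℝ)) : Set (Fin n → ℝ) :=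
  {v | ∃ (t : ℕ → ℝ) (x : ℕ → (Fin n → ℝ)),
    Filter.Tendsto t Filter.atTop Filter.atTop ∧ (∀ k, x k ∈ A) ∧
    Filter.Tendsto (fun k => (t k)⁻¹ • x k) Filter.atTop (nhds v)}

/-- Pareto efficient solutions of the vector map `g` on `C`. -/
def SOLs {n q : ℕ} (C : Set (Fin n → ℝ)) (g : Fin q → (Fin n → ℝ) → ℝ) :
    Set (Fin n → ℝ) :=
  {x | x ∈ C ∧ ¬ ∃ y ∈ C, (∀ i, g i y ≤ g i x) ∧ (∃ i, g i y ≠ g i x)}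

/-- Weak Pareto efficient solutions of the vector map `g` on `C`. -/
def SOLw {n q : ℕ} (C : Set (Fin n → ℝ)) (g : Fin q → (Fin n → ℝ) → ℝ) :
    Set (Fin n → ℝ) :=
  {x | x ∈ C ∧ ¬ ∃ y ∈ C, ∀ i, g i y < g i x}

/-- Global minimizers of a scalar function `p` on `C`. -/
def SOLmin {n : ℕ} (C : Set (Fin n → ℝ)) (p : (Fin n → ℝ) → ℝ) :
    Set (Fin n → ℝ) :=
  {x | x ∈ C ∧ ∀ y ∈ C, p x ≤ p y}

/-- The recession polynomial (leading term: top-degree homogeneous part) of a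
polynomial, as a function on `ℝⁿ`. -/
noncomputable def recPoly {n : ℕ} (p : MvPolynomial (Fin n) ℝ) : (Fin n → ℝ) → ℝ :=
  fun x => MvPolynomial.eval x (MvPolynomial.homogeneousComponent p.totalDegree p)

lemma evalHomogSmul {n : ℕ} {φ : MvPolynomial (Fin n) ℝ} {d : ℕ} (hφ : φ.IsHomogeneous d)
    (c : ℝ) (x : Fin n → ℝ) : eval (c • x) φ = c ^ d * eval x φ := by
  rw [eval_eq, eval_eq, Finset.mul_sum]
  refine Finset.sum_congr rfl fun m hm => ?_
  have hd : (∑ i ∈ m.support, m i) = d := by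
    have h1 := hφ (MvPolynomial.mem_support_iff.mp hm)
    simpa [Finsupp.weight_apply, Finsupp.sum, smul_eq_mul] using h1
  have hprod : (∏ i ∈ m.support, (c • x) i ^ m i)
      = c ^ d * ∏ i ∈ m.support, x i ^ m i := by
    simp only [Pi.smul_apply, smul_eq_mul, mul_pow]
    rw [Finset.prod_mul_distrib, Finset.prod_pow_eq_pow_sum, hd]
  rw [hprod]; ring

lemma recPolySmul {n : ℕ} (p : MvPolynomial (Fin n) ℝ) (c : ℝ) (x : Fin n → ℝ) :
    recPoly p (c • x) = c ^ p.totalDegree * recPoly p x :=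
  evalHomogSmul (homogeneousComponent_isHomogeneous p.totalDegree p) c x

lemma tendstoEvalRecPoly {n : ℕ} (p : MvPolynomial (Fin n) ℝ) {t : ℕ → ℝ}
    {x : ℕ → Fin n → ℝ} {v : Fin n → ℝ}
    (ht : Tendsto t atTop atTop)
    (hu : Tendsto (fun k => (t k)⁻¹ • x k) atTop (nhds v)) :
    Tendsto (fun k => ((t k) ^ p.totalDegree)⁻¹ * eval (x k) p) atTop
      (nhds (recPoly p v)) := by
  set D := p.totalDegree with hD
  have hterm : ∀ d ∈ Finset.range (D + 1),
      Tendsto (fun k => ((t k) ^ (D - d))⁻¹ *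
          eval ((t k)⁻¹ • x k) (homogeneousComponent d p))
        atTop (nhds (if d = D then recPoly p v else 0)) := by
    intro d hd
    have hcont : Tendsto (fun k => eval ((t k)⁻¹ • x k) (homogeneousComponent d p)) atTop
        (nhds (eval v (homogeneousComponent d p))) :=
      ((MvPolynomial.continuous_eval _).tendsto v).comp hu
    by_cases hdD : d = D
    · subst hdD
      simp only [Nat.sub_self, pow_zero, inv_one, one_mul, if_true, eq_self_iff_true]
      exact hcont
    · have hlt : d < D := lt_of_le_of_ne (Nat.lt_succ_iff.mp (Finset.mem_range.mp hd)) hdD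
      have h0 : Tendsto (fun k => ((t k) ^ (D - d))⁻¹) atTop (nhds 0) := by
        have h1 : Tendsto (fun k => (t k) ^ (D - d)) atTop atTop :=
          (tendsto_pow_atTop (by omega)).comp ht
        exact h1.inv_tendsto_atTop
      simpa [hdD] using h0.mul hcont
  have hsum := tendsto_finset_sum (Finset.range (D + 1)) hterm
  have hlim : (∑ d ∈ Finset.range (D + 1), if d = D then recPoly p v else 0)
      = recPoly p v := by
    rw [Finset.sum_ite_eq' (Finset.range (D + 1)) D (fun _ => recPoly p v)]
    simp
  rw [hlim] at hsum
  have heq : (fun k => ∑ d ∈ Finset.range (D + 1), ((t k) ^ (D - d))⁻¹ *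
      eval ((t k)⁻¹ • x k) (homogeneousComponent d p))
      =ᶠ[atTop] fun k => ((t k) ^ D)⁻¹ * eval (x k) p := by
    filter_upwards [ht.eventually_gt_atTop 0] with k hk
    have hx : x k = (t k) • ((t k)⁻¹ • x k) := by
      rw [smul_smul, mul_inv_cancel₀ hk.ne', one_smul]
    conv_rhs => rw [hx, ← MvPolynomial.sum_homogeneousComponent p]
    rw [map_sum, Finset.mul_sum]
    refine Finset.sum_congr rfl fun d hd => ?_
    rw [evalHomogSmul (homogeneousComponent_isHomogeneous d p) (t k)]
    have hdle : d ≤ D := Nat.lt_succ_iff.mp (Finset.mem_range.mp hd)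
    rw [pow_sub₀ _ hk.ne' hdle, mul_inv, inv_inv]
    ring
  exact hsum.congr' heq

lemma recPolyNonposOfBounded {n : ℕ} (p : MvPolynomial (Fin n) ℝ) (hd : 1 ≤ p.totalDegree)
    (S : Set (Fin n → ℝ)) (c : ℝ) (hS : ∀ y ∈ S, eval y p ≤ c)
    {v : Fin n → ℝ} (hv : v ∈ asymCone S) : recPoly p v ≤ 0 := by
  obtain ⟨t, x, ht, hxS, hu⟩ := hv
  have h1 := tendstoEvalRecPoly p ht hu
  have hinv : Tendsto (fun k => ((t k) ^ p.totalDegree)⁻¹) atTop (nhds 0) :=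
    ((tendsto_pow_atTop (by omega)).comp ht).inv_tendsto_atTop
  have h2 : Tendsto (fun k => ((t k) ^ p.totalDegree)⁻¹ * c) atTop (nhds 0) := by
    simpa using hinv.mul_const c
  refine le_of_tendsto_of_tendsto h1 h2 ?_
  filter_upwards [ht.eventually_gt_atTop 0] with k hk
  exact mul_le_mul_of_nonneg_left (hS _ (hxS k)) (inv_nonneg.2 (pow_nonneg hk.le _))

lemma smulMemAsymCone {n : ℕ} {A : Set (Fin n → ℝ)} {w : Fin n → ℝ}
    (hw : w ∈ asymCone A) {c : ℝ} (hc : 0 < c) : c • w ∈ asymCone A := by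
  obtain ⟨t, x, ht, hxA, hu⟩ := hw
  refine ⟨fun k => t k / c, x, ht.atTop_div_const hc, hxA, ?_⟩
  have key : ∀ k, (t k / c)⁻¹ • x k = c • ((t k)⁻¹ • x k) := by
    intro k
    rw [div_eq_mul_inv, mul_inv, inv_inv, mul_comm, smul_smul]
  simp only [key]
  exact hu.const_smul c

theorem stmt18 {n q : ℕ} (K : Set (Fin n → ℝ)) (hKne : K.Nonempty) (hKcl : IsClosed K)
    (f : Fin q → MvPolynomial (Fin n) ℝ) (hdeg : ∀ i, 1 ≤ (f i).totalDegree)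
    (xbar : Fin n → ℝ) (hx : xbar ∈ K)
    (ha : ¬ Bornology.IsBounded
      (SOLw (asymCone {x ∈ K | ∀ j, eval x (f j) ≤ eval xbar (f j)})
        (fun i => recPoly (f i))))
    (hb : ∀ v ∈ SOLw (asymCone {x ∈ K | ∀ j, eval x (f j) ≤ eval xbar (f j)})
        (fun i => recPoly (f i)), v ≠ 0 →
      ∃ t : ℝ, 0 < t ∧ ∀ x ∈ {x ∈ K | ∀ j, eval x (f j) ≤ eval xbar (f j)},
        x - t • v ∈ K ∧ ∀ i, eval (x - t • v) (f i) ≤ eval x (f i)) :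
    (SOLs K (fun i x => eval x (f i))).Nonempty := by
  classical
  set S : Set (Fin n → ℝ) := {x ∈ K | ∀ j, eval x (f j) ≤ eval xbar (f j)} with hSdef
  have hxbarS : xbar ∈ S := ⟨hx, fun j => le_rfl⟩
  have hScl : IsClosed S := by
    have hrw : S = K ∩ ⋂ j, {x | eval x (f j) ≤ eval xbar (f j)} := by
      ext y
      simp only [hSdef, Set.mem_setOf_eq, Set.mem_inter_iff, Set.mem_iInter]
    rw [hrw]
    exact hKcl.inter (isClosed_iInter fun j =>
      isClosed_le (MvPolynomial.continuous_eval _) continuous_const)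
  set p : (Fin n → ℝ) → ℝ := fun x => ∑ i, eval x (f i) with hpdef
  have hpc : Continuous p :=
    continuous_finset_sum _ fun i _ => MvPolynomial.continuous_eval _
  set g : (Fin n → ℝ) → ℝ := fun x => ∑ j, x j * x j with hgdef
  have hgc : Continuous g :=
    continuous_finset_sum _ fun j _ => (continuous_apply j).mul (continuous_apply j)
  set R : ℕ → ℝ := fun k => g xbar + k with hRdef
  have hmin : ∀ k : ℕ, ∃ z : Fin n → ℝ, z ∈ S ∧ g z ≤ R k ∧
      (∀ y ∈ S, g y ≤ R k → p z ≤ p y) ∧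
      (∀ y ∈ S, g y ≤ R k → p y ≤ p z → g z ≤ g y) := by
    intro k
    set C : Set (Fin n → ℝ) := {x ∈ S | g x ≤ R k} with hC
    have hCne : C.Nonempty :=
      ⟨xbar, hxbarS, le_add_of_nonneg_right (Nat.cast_nonneg k)⟩
    have hCcl : IsClosed C := hScl.inter (isClosed_le hgc continuous_const)
    have hCcpt : IsCompact C := by
      have hsub : C ⊆ Metric.closedBall 0 (Real.sqrt (R k)) := by
        intro y hy
        rw [Metric.mem_closedBall, dist_zero_right]
        rw [pi_norm_le_iff_of_nonneg (Real.sqrt_nonneg _)]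
        intro j
        have h1 : y j * y j ≤ R k :=
          le_trans (Finset.single_le_sum (fun j _ => mul_self_nonneg (y j))
            (Finset.mem_univ j)) hy.2
        exact Real.abs_le_sqrt (by nlinarith)
      exact (isCompact_closedBall _ _).of_isClosed_subset hCcl hsub
    obtain ⟨m, hmC, hm⟩ := hCcpt.exists_isMinOn hCne hpc.continuousOn
    set A : Set (Fin n → ℝ) := {x ∈ C | p x ≤ p m} with hA
    have hAcpt : IsCompact A :=
      hCcpt.of_isClosed_subset (hCcl.inter (isClosed_le hpc continuous_const))
        (fun y hy => hy.1)
    obtain ⟨z, hzA, hz⟩ := hAcpt.exists_isMinOn ⟨m, hmC, le_rfl⟩ hgc.continuousOn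
    refine ⟨z, hzA.1.1, hzA.1.2, ?_, ?_⟩
    · intro y hyS hyR
      exact le_trans hzA.2 (isMinOn_iff.mp hm y ⟨hyS, hyR⟩)
    · intro y hyS hyR hpy
      exact isMinOn_iff.mp hz y ⟨⟨hyS, hyR⟩, le_trans hpy hzA.2⟩
  choose x hxS hxR hxmin hxnorm using hmin
  have conclude : ∀ z ∈ S, (∀ y ∈ S, p z ≤ p y) →
      (SOLs K (fun i x => eval x (f i))).Nonempty := by
    intro z hzS hzmin
    refine ⟨z, hzS.1, ?_⟩
    rintro ⟨y, hyK, hyle, i0, hne⟩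
    have hyS : y ∈ S := ⟨hyK, fun j => le_trans (hyle j) (hzS.2 j)⟩
    have hlt : p y < p z :=
      Finset.sum_lt_sum (fun i _ => hyle i)
        ⟨i0, Finset.mem_univ i0, lt_of_le_of_ne (hyle i0) hne⟩
    exact absurd (hzmin y hyS) (not_le.mpr hlt)
  have hRt : Tendsto R atTop atTop :=
    tendsto_atTop_add_const_left _ _ tendsto_natCast_atTop_atTop
  by_cases hbd : ∃ c : ℝ, ∃ᶠ k in atTop, ‖x k‖ ≤ c
  · obtain ⟨c, hc⟩ := hbd
    obtain ⟨φ, hφ, hφc⟩ := Filter.extraction_of_frequently_atTop hc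
    obtain ⟨a, -, ψ, hψ, hψt⟩ := (isCompact_closedBall (0 : Fin n → ℝ) c).tendsto_subseq
      (x := fun j => x (φ j))
      (fun j => by rw [Metric.mem_closedBall, dist_zero_right]; exact hφc j)
    set σ : ℕ → ℕ := φ ∘ ψ with hσ
    have hσm : StrictMono σ := hφ.comp hψ
    have hat : Tendsto (fun j => x (σ j)) atTop (nhds a) := hψt
    have haS : a ∈ S := hScl.mem_of_tendsto hat (Eventually.of_forall fun j => hxS _)
    apply conclude a haS
    intro y hyS
    have hev : ∀ᶠ j in atTop, p (x (σ j)) ≤ p y := by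
      filter_upwards [(hRt.comp hσm.tendsto_atTop).eventually_ge_atTop (g y)] with j hj
      exact hxmin (σ j) y hyS hj
    exact le_of_tendsto ((hpc.tendsto a).comp hat) hev
  · push_neg at hbd
    have hnt : Tendsto (fun k => ‖x k‖) atTop atTop := by
      rw [tendsto_atTop]
      intro b
      have hb' := hbd b
      filter_upwards [hb'] with k hk
      exact hk.le
    set u : ℕ → Fin n → ℝ := fun k => ‖x k‖⁻¹ • x k with hudef
    have humem : ∀ k, u k ∈ Metric.closedBall (0 : Fin n → ℝ) 1 := by
      intro k
      rw [Metric.mem_closedBall, dist_zero_right, hudef]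
      simp only
      rw [norm_smul, norm_inv, norm_norm]
      rcases eq_or_ne (‖x k‖) 0 with h | h
      · simp [h]
      · rw [inv_mul_cancel₀ h]
    obtain ⟨v, -, φ, hφ, hvt⟩ :=
      (isCompact_closedBall (0 : Fin n → ℝ) 1).tendsto_subseq humem
    have hnφ : Tendsto (fun j => ‖x (φ j)‖) atTop atTop := hnt.comp hφ.tendsto_atTop
    have hv1 : ‖v‖ = 1 := by
      have h1 : Tendsto (fun j => ‖u (φ j)‖) atTop (nhds ‖v‖) :=
        (continuous_norm.tendsto v).comp hvt
      have h2 : (fun j => ‖u (φ j)‖) =ᶠ[atTop] fun _ => (1 : ℝ) := by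
        filter_upwards [hnφ.eventually_gt_atTop 0] with j hj
        rw [hudef]
        simp only
        rw [norm_smul, norm_inv, norm_norm, inv_mul_cancel₀ hj.ne']
      exact tendsto_nhds_unique (h1.congr' h2) tendsto_const_nhds
    have hv0 : v ≠ 0 := by
      intro h
      rw [h, norm_zero] at hv1
      exact one_ne_zero hv1.symm
    have hvcone : v ∈ asymCone S :=
      ⟨fun j => ‖x (φ j)‖, fun j => x (φ j), hnφ, fun j => hxS _, hvt⟩
    have hnonpos : ∀ w ∈ asymCone S, ∀ i, recPoly (f i) w ≤ 0 := fun w hw i =>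
      recPolyNonposOfBounded (f i) (hdeg i) S (eval xbar (f i)) (fun y hy => hy.2 i) hw
    have hSOLwne : (SOLw (asymCone S) fun i => recPoly (f i)).Nonempty := by
      by_contra h
      rw [Set.not_nonempty_iff_eq_empty] at h
      exact ha (h ▸ Bornology.isBounded_empty)
    have hvSOLw : v ∈ SOLw (asymCone S) fun i => recPoly (f i) := by
      refine ⟨hvcone, ?_⟩
      rintro ⟨w, hwcone, hwlt⟩
      obtain ⟨z0, hz0cone, hz0⟩ := hSOLwne
      apply hz0
      have hcneg : ∀ i, recPoly (f i) w < 0 := fun i =>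
        lt_of_lt_of_le (hwlt i) (hnonpos v hvcone i)
      obtain ⟨M, hM⟩ :=
        (Finset.univ.image fun i : Fin q => recPoly (f i) z0 / recPoly (f i) w).exists_le
      set lam : ℝ := max 1 (M + 1) with hlam
      have hlam1 : (1 : ℝ) ≤ lam := le_max_left _ _
      have hlam0 : (0 : ℝ) < lam := lt_of_lt_of_le one_pos hlam1
      refine ⟨lam • w, smulMemAsymCone hwcone hlam0, ?_⟩
      intro i
      show recPoly (f i) (lam • w) < recPoly (f i) z0
      have hscale : recPoly (f i) (lam • w) = lam ^ (f i).totalDegree * recPoly (f i) w :=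
        recPolySmul _ _ _
      have h1 : lam ^ (f i).totalDegree * recPoly (f i) w ≤ lam * recPoly (f i) w :=
        mul_le_mul_of_nonpos_right
          (le_self_pow₀ hlam1 (by have := hdeg i; omega)) (hcneg i).le
      have h2 : lam * recPoly (f i) w < recPoly (f i) z0 := by
        have hMi : recPoly (f i) z0 / recPoly (f i) w ≤ M :=
          hM _ (Finset.mem_image_of_mem _ (Finset.mem_univ i))
        have hlM : recPoly (f i) z0 / recPoly (f i) w < lam :=
          lt_of_le_of_lt hMi (lt_of_lt_of_le (lt_add_one M) (le_max_right _ _))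
        have h3 := mul_lt_mul_of_neg_right hlM (hcneg i)
        rwa [div_mul_cancel₀ _ (hcneg i).ne] at h3
      rw [hscale]
      exact lt_of_le_of_lt h1 h2
    obtain ⟨t, ht0, htp⟩ := hb v hvSOLw hv0
    set ip : (Fin n → ℝ) → (Fin n → ℝ) → ℝ := fun a b => ∑ j, a j * b j with hipdef
    have hipvv : 0 < ip v v := by
      obtain ⟨j0, hj0⟩ := Function.ne_iff.mp hv0
      refine Finset.sum_pos' (fun j _ => mul_self_nonneg (v j))
        ⟨j0, Finset.mem_univ j0, ?_⟩
      exact mul_self_pos.mpr hj0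
    have hipc : Tendsto (fun j => ip (u (φ j)) v) atTop (nhds (ip v v)) := by
      have hcont : Continuous fun a => ip a v :=
        continuous_finset_sum _ fun j _ => (continuous_apply j).mul continuous_const
      exact (hcont.tendsto v).comp hvt
    have hipx : Tendsto (fun j => ip (x (φ j)) v) atTop atTop := by
      have heq : (fun j => ‖x (φ j)‖ * ip (u (φ j)) v)
          =ᶠ[atTop] fun j => ip (x (φ j)) v := by
        filter_upwards [hnφ.eventually_gt_atTop 0] with j hj
        rw [hudef, hipdef]
        simp only [Pi.smul_apply, smul_eq_mul]
        rw [Finset.mul_sum]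
        refine Finset.sum_congr rfl fun m _ => ?_
        field_simp
      exact (hnφ.atTop_mul_pos hipvv hipc).congr' heq
    have hev : ∀ᶠ j in atTop, t * g v < 2 * ip (x (φ j)) v := by
      filter_upwards [hipx.eventually_gt_atTop (t * g v / 2)] with j hj
      linarith
    obtain ⟨j, hj⟩ := hev.exists
    set a : Fin n → ℝ := x (φ j) with hadef
    set y : Fin n → ℝ := a - t • v with hydef
    have haS : a ∈ S := hxS _
    obtain ⟨hyK, hyle⟩ := htp a haS
    have hyS : y ∈ S := ⟨hyK, fun i => le_trans (hyle i) (haS.2 i)⟩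
    have hgexp : g y = g a - 2 * t * ip a v + t ^ 2 * g v := by
      have hterm : ∀ m : Fin n, y m * y m
          = a m * a m - 2 * t * (a m * v m) + t ^ 2 * (v m * v m) := by
        intro m
        rw [hydef]
        simp only [Pi.sub_apply, Pi.smul_apply, smul_eq_mul]
        ring
      rw [hgdef, hipdef]
      simp only
      calc (∑ m, y m * y m)
          = ∑ m, (a m * a m - 2 * t * (a m * v m) + t ^ 2 * (v m * v m)) :=
            Finset.sum_congr rfl fun m _ => hterm m
        _ = (∑ m, a m * a m) - 2 * t * (∑ m, a m * v m)
              + t ^ 2 * (∑ m, v m * v m) := by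
            rw [Finset.sum_add_distrib, Finset.sum_sub_distrib, ← Finset.mul_sum,
              ← Finset.mul_sum]
    have hgy : g y < g a := by
      rw [hgexp]
      nlinarith [mul_pos ht0 (sub_pos.mpr hj)]
    have hgya : g y ≤ R (φ j) := le_trans hgy.le (hxR (φ j))
    have hpy : p y ≤ p a := Finset.sum_le_sum fun i _ => hyle i
    exact absurd (hxnorm (φ j) y hyS hgya hpy) (not_le.mpr hgy)
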